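/- Assume the setting of the discrete Dirac structure M₁f₁ = -Dᵀe₂ + B e∂, M₂f₂ = D e₁, M∂ f∂ = -Bᵀ e₁ with symmetric mass matrices, and suppose f₁ = dα₁/dt, f₂ = dα₂/dt, and the discrete Hamiltonian Hᵈ(α₁,α₂) satisfies ∇_{α₁}Hᵈ = M₁ e₁ and ∇_{α₂}Hᵈ = M₂ e₂ (compatibility). Then d/dt Hᵈ = -e∂ᵀ M∂ f∂. -/

import Mathlib

open Matrix

/-- The continuous linear map `v ↦ w ⬝ᵥ v` on `Fin n → ℝ`. -/
noncomputable def dotCLM {n : ℕ} (w : Fin n → ℝ) : (Fin n → ℝ) →L[ℝ] ℝ :=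
  LinearMap.toContinuousLinearMap
    { toFun := fun v => w ⬝ᵥ v
      map_add' := fun a b => dotProduct_add w a b
      map_smul' := fun c a => by simp [dotProduct_smul] }

/-- Discrete power balance (hyperbolic case): with the discrete Dirac structure
and compatible constitutive relations `∇_{α₁}Hᵈ = M₁e₁`, `∇_{α₂}Hᵈ = M₂e₂`,
one has `d/dt Hᵈ = -e∂ᵀ M∂ f∂`. -/
theorem stmt9 {n₁ n₂ nb : ℕ}
    (M₁ : Matrix (Fin n₁) (Fin n₁) ℝ) (M₂ : Matrix (Fin n₂) (Fin n₂) ℝ)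
    (Mb : Matrix (Fin nb) (Fin nb) ℝ)
    (hM₁ : M₁ᵀ = M₁) (hM₂ : M₂ᵀ = M₂) (hMb : Mbᵀ = Mb)
    (D : Matrix (Fin n₂) (Fin n₁) ℝ) (B : Matrix (Fin n₁) (Fin nb) ℝ)
    (α₁ f₁ e₁ : ℝ → (Fin n₁ → ℝ)) (α₂ f₂ e₂ : ℝ → (Fin n₂ → ℝ))
    (fb eb : ℝ → (Fin nb → ℝ))
    (hα₁ : ∀ t, HasDerivAt α₁ (f₁ t) t) (hα₂ : ∀ t, HasDerivAt α₂ (f₂ t) t)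
    (h1 : ∀ t, M₁.mulVec (f₁ t) = -(Dᵀ.mulVec (e₂ t)) + B.mulVec (eb t))
    (h2 : ∀ t, M₂.mulVec (f₂ t) = D.mulVec (e₁ t))
    (h3 : ∀ t, Mb.mulVec (fb t) = -(Bᵀ.mulVec (e₁ t)))
    (Hd : (Fin n₁ → ℝ) → (Fin n₂ → ℝ) → ℝ)
    (hgrad : ∀ t, HasFDerivAt (fun p : (Fin n₁ → ℝ) × (Fin n₂ → ℝ) => Hd p.1 p.2)
      ((dotCLM (M₁.mulVec (e₁ t))).comp (ContinuousLinearMap.fst ℝ (Fin n₁ → ℝ) (Fin n₂ → ℝ)) +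
       (dotCLM (M₂.mulVec (e₂ t))).comp (ContinuousLinearMap.snd ℝ (Fin n₁ → ℝ) (Fin n₂ → ℝ)))
      (α₁ t, α₂ t))
    (t : ℝ) :
    HasDerivAt (fun s => Hd (α₁ s) (α₂ s)) (-(eb t ⬝ᵥ Mb.mulVec (fb t))) t := by
  have hp : HasDerivAt (fun s => (α₁ s, α₂ s)) (f₁ t, f₂ t) t := (hα₁ t).prodMk (hα₂ t)
  have hc := (hgrad t).comp_hasDerivAt t hp
  have hval : M₁.mulVec (e₁ t) ⬝ᵥ f₁ t + M₂.mulVec (e₂ t) ⬝ᵥ f₂ t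
      = -(eb t ⬝ᵥ Mb.mulVec (fb t)) := by
    have k1 : M₁.mulVec (e₁ t) ⬝ᵥ f₁ t = e₁ t ⬝ᵥ M₁.mulVec (f₁ t) := by
      rw [dotProduct_comm, dotProduct_mulVec, ← Matrix.mulVec_transpose, hM₁]
      exact (dotProduct_comm _ _)
    have k2 : M₂.mulVec (e₂ t) ⬝ᵥ f₂ t = e₂ t ⬝ᵥ M₂.mulVec (f₂ t) := by
      rw [dotProduct_comm, dotProduct_mulVec, ← Matrix.mulVec_transpose, hM₂]
      exact (dotProduct_comm _ _)
    rw [k1, k2, h1 t, h2 t, h3 t]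
    have k3 : e₂ t ⬝ᵥ D.mulVec (e₁ t) = e₁ t ⬝ᵥ Dᵀ.mulVec (e₂ t) := by
      rw [dotProduct_mulVec, ← Matrix.mulVec_transpose, dotProduct_comm]
    have k4 : eb t ⬝ᵥ Bᵀ.mulVec (e₁ t) = e₁ t ⬝ᵥ B.mulVec (eb t) := by
      rw [dotProduct_mulVec, ← Matrix.mulVec_transpose, Matrix.transpose_transpose,
        dotProduct_comm]
    rw [k3, dotProduct_neg, k4]
    simp [dotProduct_add, dotProduct_neg]
  refine hc.congr_deriv ?_
  rw [← hval]
  rfl
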